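/- Let X be a Hausdorff space and A = ⋃_{k=1}^m A_k where each A_k is a retract of X (via a retraction r_k : X → A_k) and a pointwise attractor of a finite IFS (X, W_k) with pointwise basin all of X. Set F = ⋃_{k=1}^m {w ∘ r_k : w ∈ W_k}. Then F(X) = A and A is a pointwise attractor of (X, F) with B_p(A, F) = X. -/

import Mathlib

open Filter Topology Set

/-- Convergence of a sequence of sets in the Vietoris topology: the sequence is
eventually in every subbasic Vietoris-open set containing the limit. -/
def VConv {X : Type*} [TopologicalSpace X] (A : ℕ → Set X) (L : Set X) : Prop :=
  (∀ U : Set X, IsOpen U → L ⊆ U → ∀ᶠ n in atTop, A n ⊆ U) ∧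
  (∀ U : Set X, IsOpen U → (L ∩ U).Nonempty → ∀ᶠ n in atTop, (A n ∩ U).Nonempty)

/-- Hutchinson (Barnsley–Hutchinson) operator of a family of maps. -/
def hutch {X : Type*} (F : Set (X → X)) (S : Set X) : Set X := ⋃ f ∈ F, f '' S

/-- Strict attractor of the IFS given by the family `F`. -/
def StrictAttractor {X : Type*} [TopologicalSpace X] (F : Set (X → X)) (A : Set X) : Prop :=
  A.Nonempty ∧ IsCompact A ∧ ∃ U : Set X, IsOpen U ∧ A ⊆ U ∧
    ∀ S : Set X, S.Nonempty → IsCompact S → S ⊆ U →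
      VConv (fun n => (hutch F)^[n] S) A

/-- Pointwise basin of a set for the IFS given by `F`. -/
def pBasin {X : Type*} [TopologicalSpace X] (F : Set (X → X)) (A : Set X) : Set X :=
  {x | VConv (fun n => (hutch F)^[n] {x}) A}

/-- Pointwise attractor of the IFS given by the family `F`. -/
def PtAttractor {X : Type*} [TopologicalSpace X] (F : Set (X → X)) (A : Set X) : Prop :=
  A.Nonempty ∧ IsCompact A ∧ A ⊆ interior (pBasin F A)

/-- Kuratowski lower limit. -/
def KLi {X : Type*} [TopologicalSpace X] (A : ℕ → Set X) : Set X :=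
  {x | ∀ U : Set X, IsOpen U → x ∈ U → ∀ᶠ n in atTop, (A n ∩ U).Nonempty}

/-- Kuratowski upper limit. -/
def KLs {X : Type*} [TopologicalSpace X] (A : ℕ → Set X) : Set X :=
  {x | ∀ U : Set X, IsOpen U → x ∈ U → ∃ᶠ n in atTop, (A n ∩ U).Nonempty}

lemma hutch_mono {X : Type*} {F : Set (X → X)} {S T : Set X} (h : S ⊆ T) :
    hutch F S ⊆ hutch F T :=
  Set.iUnion₂_mono fun _ _ => Set.image_mono h

lemma hutch_le {X : Type*} {F G : Set (X → X)} (h : F ⊆ G) (S : Set X) :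
    hutch F S ⊆ hutch G S :=
  Set.biUnion_subset_biUnion_left h

lemma hutch_iter_le {X : Type*} {F G : Set (X → X)} (h : F ⊆ G) (S : Set X) (n : ℕ) :
    (hutch F)^[n] S ⊆ (hutch G)^[n] S := by
  induction n with
  | zero => exact le_rfl
  | succ n ih =>
      rw [Function.iterate_succ_apply', Function.iterate_succ_apply']
      exact (hutch_mono ih).trans (hutch_le h _)

lemma hutch_iter_subset {X : Type*} {W : Set (X → X)} {A T : Set X}
    (hinv : hutch W A ⊆ A) (hT : T ⊆ A) (n : ℕ) : (hutch W)^[n] T ⊆ A := by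
  induction n with
  | zero => exact hT
  | succ n ih =>
      rw [Function.iterate_succ_apply']
      exact (hutch_mono ih).trans hinv

lemma hutch_comp {X : Type*} (W : Set (X → X)) (r : X → X) (S : Set X) :
    hutch ((fun w : X → X => w ∘ r) '' W) S = hutch W (r '' S) := by
  simp only [hutch, Set.biUnion_image]
  exact Set.iUnion₂_congr fun w _ => by rw [← Set.image_comp]

lemma mem_hutch {X : Type*} {W : Set (X → X)} {S : Set X} {w : X → X} {b : X}
    (hw : w ∈ W) (hb : b ∈ S) : w b ∈ hutch W S :=
  Set.mem_biUnion hw ⟨b, hb, rfl⟩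

/-- Key invariance: a pointwise attractor (with full basin) is invariant. -/
lemma hutch_fixed {X : Type*} [TopologicalSpace X] [T2Space X] {W : Set (X → X)}
    (hWfin : W.Finite) (hWc : ∀ w ∈ W, Continuous w) {A : Set X} (hc : IsCompact A)
    (hattr : ∀ x : X, VConv (fun n => (hutch W)^[n] {x}) A) : hutch W A = A := by
  apply Set.Subset.antisymm
  · rintro y hy
    simp only [hutch, Set.mem_iUnion, Set.mem_image] at hy
    obtain ⟨w, hw, a, ha, rfl⟩ := hy
    by_contra hyA
    obtain ⟨V, U, hVo, hUo, hyV, hAU, hVU⟩ :=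
      SeparatedNhds.of_isCompact_isCompact isCompact_singleton hc
        (Set.disjoint_singleton_left.2 hyA)
    obtain ⟨h1, h2⟩ := hattr a
    have hy' : w a ∈ V := hyV rfl
    have e2 := h2 (w ⁻¹' V) (hVo.preimage (hWc w hw)) ⟨a, ha, hy'⟩
    have e1 := h1 U hUo hAU
    rw [eventually_atTop] at e1 e2
    obtain ⟨N1, h1'⟩ := e1
    obtain ⟨N2, h2'⟩ := e2
    obtain ⟨b, hbS, hbV⟩ := h2' (max N1 N2) (le_max_right _ _)
    have hbU : w b ∈ (hutch W)^[max N1 N2 + 1] {a} := by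
      rw [Function.iterate_succ_apply']
      exact mem_hutch hw hbS
    have : w b ∈ U := h1' _ ((le_max_left N1 N2).trans (Nat.le_succ _)) hbU
    exact hVU.le_bot ⟨hbV, this⟩
  · intro a ha
    by_contra hnot
    have hK : IsCompact (hutch W A) :=
      hWfin.isCompact_biUnion fun w hw => hc.image (hWc w hw)
    obtain ⟨V, U, hVo, hUo, haV, hKU, hVU⟩ :=
      SeparatedNhds.of_isCompact_isCompact isCompact_singleton hK
        (Set.disjoint_singleton_left.2 hnot)
    have hU'o : IsOpen (⋂ w ∈ W, w ⁻¹' U) :=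
      hWfin.isOpen_biInter fun w hw => hUo.preimage (hWc w hw)
    have hAU' : A ⊆ ⋂ w ∈ W, w ⁻¹' U := fun a' ha' =>
      Set.mem_iInter₂.2 fun w hw => hKU (mem_hutch hw ha')
    obtain ⟨h1, h2⟩ := hattr a
    have e1 := h1 _ hU'o hAU'
    have e2 := h2 V hVo ⟨a, ha, haV rfl⟩
    rw [eventually_atTop] at e1 e2
    obtain ⟨N1, h1'⟩ := e1
    obtain ⟨N2, h2'⟩ := e2
    obtain ⟨y, hyS0, hyV⟩ := h2' (max N1 N2 + 1) ((le_max_right _ _).trans (Nat.le_succ _))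
    have hyS : y ∈ (hutch W)^[max N1 N2 + 1] {a} := hyS0
    rw [Function.iterate_succ_apply'] at hyS
    simp only [hutch, Set.mem_iUnion, Set.mem_image] at hyS
    obtain ⟨w, hw, b, hb, rfl⟩ := hyS
    have hbU' := h1' _ (le_max_left _ _) hb
    have : w b ∈ U := Set.mem_iInter₂.1 hbU' w hw
    exact hVU.le_bot ⟨hyV, this⟩

lemma hutch_comp_iter {X : Type*} {W : Set (X → X)} {r : X → X} {A : Set X}
    (hrid : ∀ x ∈ A, r x = x) (hrto : ∀ x, r x ∈ A) (hinv : hutch W A ⊆ A)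
    (x : X) (n : ℕ) :
    (hutch ((fun w : X → X => w ∘ r) '' W))^[n + 1] {x} = (hutch W)^[n + 1] {r x} := by
  induction n with
  | zero => simp [hutch_comp, Set.image_singleton]
  | succ n ih =>
      rw [Function.iterate_succ_apply' _ (n + 1), Function.iterate_succ_apply' _ (n + 1), ih,
        hutch_comp]
      have hsub : (hutch W)^[n + 1] {r x} ⊆ A :=
        hutch_iter_subset hinv (Set.singleton_subset_iff.2 (hrto x)) _
      have himg : r '' ((hutch W)^[n + 1] {r x}) = (hutch W)^[n + 1] {r x} := by
        apply Set.Subset.antisymm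
        · rintro y ⟨b, hb, rfl⟩
          rwa [hrid b (hsub hb)]
        · intro b hb
          exact ⟨b, hb, hrid b (hsub hb)⟩
      rw [himg]

theorem union_of_retract_attractors {X : Type*} [TopologicalSpace X] [T2Space X]
    {m : ℕ} (hm : 1 ≤ m) (A : Fin m → Set X)
    (hAne : ∀ k, (A k).Nonempty) (hAc : ∀ k, IsCompact (A k))
    (r : Fin m → X → X) (hrcont : ∀ k, Continuous (r k))
    (hrid : ∀ k, ∀ x ∈ A k, r k x = x) (hrto : ∀ k, ∀ x : X, r k x ∈ A k)
    (W : Fin m → Set (X → X)) (hWfin : ∀ k, (W k).Finite)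
    (hWcont : ∀ k, ∀ w ∈ W k, Continuous w)
    (hWattr : ∀ k, ∀ x : X, VConv (fun n => (hutch (W k))^[n] {x}) (A k)) :
    hutch (⋃ k, (fun w : X → X => w ∘ r k) '' W k) Set.univ = ⋃ k, A k ∧
    (∀ x : X, VConv (fun n => (hutch (⋃ k, (fun w : X → X => w ∘ r k) '' W k))^[n] {x})
      (⋃ k, A k)) ∧
    PtAttractor (⋃ k, (fun w : X → X => w ∘ r k) '' W k) (⋃ k, A k) := by
  classical
  set F := ⋃ k, (fun w : X → X => w ∘ r k) '' W k with hF
  set AU := ⋃ k, A k with hAU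
  have hinv : ∀ k, hutch (W k) (A k) = A k := fun k =>
    hutch_fixed (hWfin k) (hWcont k) (hAc k) (hWattr k)
  have hFS : ∀ S : Set X, hutch F S = ⋃ k, hutch (W k) (r k '' S) := by
    intro S
    rw [hF]
    simp only [hutch, Set.biUnion_iUnion]
    exact Set.iUnion_congr fun k => by
      rw [← hutch, hutch_comp, hutch]
  have hrimg : ∀ k (S : Set X), r k '' S ⊆ A k := by
    rintro k S y ⟨b, _, rfl⟩; exact hrto k b
  have hsubAU : ∀ S : Set X, hutch F S ⊆ AU := by
    intro S
    rw [hFS]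
    exact Set.iUnion_mono fun k => (hutch_mono (hrimg k S)).trans (hinv k).subset
  have part1 : hutch F Set.univ = AU := by
    rw [hFS]
    refine Set.iUnion_congr fun k => ?_
    have h : r k '' Set.univ = A k := by
      apply Set.Subset.antisymm (hrimg k _)
      intro a ha
      exact ⟨a, Set.mem_univ a, hrid k a ha⟩
    rw [h, hinv k]
  have part2 : ∀ x : X, VConv (fun n => (hutch F)^[n] {x}) AU := by
    intro x
    have hiterAU : ∀ n : ℕ, (hutch F)^[n + 1] {x} ⊆ AU := by
      intro n
      rw [Function.iterate_succ_apply']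
      exact hsubAU _
    have hlower : ∀ k (n : ℕ), (hutch (W k))^[n + 1] {r k x} ⊆ (hutch F)^[n + 1] {x} := by
      intro k n
      rw [hF, ← hutch_comp_iter (hrid k) (hrto k) (hinv k).subset x n]
      exact hutch_iter_le
        (Set.subset_iUnion (fun j : Fin m => (fun w : X → X => w ∘ r j) '' W j) k) {x} (n + 1)
    constructor
    · intro U _ hAUU
      filter_upwards [eventually_ge_atTop 1] with n hn
      obtain ⟨p, rfl⟩ : ∃ p, n = p + 1 := ⟨n - 1, by omega⟩
      exact (hiterAU p).trans hAUU
    · intro U hUo hne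
      obtain ⟨a, haAU, haU⟩ := hne
      rw [hAU, Set.mem_iUnion] at haAU
      obtain ⟨k, hak⟩ := haAU
      have e2 := (hWattr k (r k x)).2 U hUo ⟨a, hak, haU⟩
      rw [eventually_atTop] at e2 ⊢
      obtain ⟨N, hN⟩ := e2
      refine ⟨N + 1, fun n hn => ?_⟩
      obtain ⟨p, rfl⟩ : ∃ p, n = p + 1 := ⟨n - 1, by omega⟩
      obtain ⟨y, hy, hyU⟩ := hN (p + 1) (by omega)
      exact ⟨y, hlower k p hy, hyU⟩
  refine ⟨part1, part2, ?_, isCompact_iUnion hAc, ?_⟩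
  · obtain ⟨a, ha⟩ := hAne ⟨0, hm⟩
    exact ⟨a, Set.mem_iUnion.2 ⟨⟨0, hm⟩, ha⟩⟩
  · have h : pBasin F AU = Set.univ := Set.eq_univ_of_forall part2
    rw [h, interior_univ]
    exact Set.subset_univ _
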